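/- For the ℂ³/ℤ₃ quiver: let A be the path algebra (over ℂ) of the quiver with three vertices v₀, v₁, v₂ and arrows aᵢ: v₁ → v₀, bᵢ: v₂ → v₁, cᵢ: v₀ → v₂ (i = 0,1,2), modulo the relations aᵢbⱼ = aⱼbᵢ, bᵢcⱼ = bⱼcᵢ, cᵢaⱼ = cⱼaᵢ for all i,j. Then the center Z(A) is isomorphic to the subring of A spanned by diagonal elements diag(r,r,r), and Z(A) is generated as a ℂ-algebra by the elements xᵢⱼₖ = aᵢbⱼcₖ + bⱼcₖaᵢ + cₖaᵢbⱼ for i ≤ j ≤ k, with Z(A) isomorphic to the ℤ₃-invariant subring of ℂ[u₀,u₁,u₂] via xᵢⱼₖ ↦ uᵢuⱼuₖ. -/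

import Mathlib

open MvPolynomial

namespace Stmt12

/-- Generators of the `ℂ³/ℤ₃` quiver path algebra: three trivial paths `e₀,e₁,e₂` and three
groups of three arrows `aᵢ : v₁ → v₀`, `bᵢ : v₂ → v₁`, `cᵢ : v₀ → v₂`. -/
abbrev Gen := Fin 3 ⊕ Fin 3 ⊕ Fin 3 ⊕ Fin 3

abbrev F := FreeAlgebra ℂ Gen

def e (i : Fin 3) : F := FreeAlgebra.ι ℂ (Sum.inl i)
def a (i : Fin 3) : F := FreeAlgebra.ι ℂ (Sum.inr (Sum.inl i))
def b (i : Fin 3) : F := FreeAlgebra.ι ℂ (Sum.inr (Sum.inr (Sum.inl i)))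
def c (i : Fin 3) : F := FreeAlgebra.ι ℂ (Sum.inr (Sum.inr (Sum.inr i)))

/-- The path-algebra relations: the `eᵢ` are orthogonal idempotents summing to `1`, the
arrows compose only head-to-tail (`aᵢ = e₀aᵢe₁`, `bᵢ = e₁bᵢe₂`, `cᵢ = e₂cᵢe₀`), together
with the superpotential relations `aᵢbⱼ = aⱼbᵢ`, `bᵢcⱼ = bⱼcᵢ`, `cᵢaⱼ = cⱼaᵢ`. -/
inductive PathRel : F → F → Prop
  | ee (i j : Fin 3) : PathRel (e i * e j) (if i = j then e i else 0)
  | unit : PathRel (e 0 + e 1 + e 2) 1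
  | pa (i : Fin 3) : PathRel (a i) (e 0 * a i * e 1)
  | pb (i : Fin 3) : PathRel (b i) (e 1 * b i * e 2)
  | pc (i : Fin 3) : PathRel (c i) (e 2 * c i * e 0)
  | ab (i j : Fin 3) : PathRel (a i * b j) (a j * b i)
  | bc (i j : Fin 3) : PathRel (b i * c j) (b j * c i)
  | ca (i j : Fin 3) : PathRel (c i * a j) (c j * a i)

/-- The quiver algebra `A` for `ℂ³/ℤ₃`. -/
abbrev A := RingQuot PathRel

noncomputable def aa (i : Fin 3) : A := RingQuot.mkAlgHom ℂ PathRel (a i)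
noncomputable def bb (i : Fin 3) : A := RingQuot.mkAlgHom ℂ PathRel (b i)
noncomputable def cc (i : Fin 3) : A := RingQuot.mkAlgHom ℂ PathRel (c i)

/-- `xᵢⱼₖ = aᵢbⱼcₖ + bⱼcₖaᵢ + cₖaᵢbⱼ`, the closed loop `diag(r,r,r)` around the quiver. -/
noncomputable def x (i j k : Fin 3) : A :=
  aa i * bb j * cc k + bb j * cc k * aa i + cc k * aa i * bb j

-- ## The matrix model
abbrev R := MvPolynomial (Fin 3) ℂ
abbrev M3 := Matrix (Fin 3) (Fin 3) R

open Matrix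
open Fin.NatCast Fin.CommRing

/-- generator images -/
noncomputable def g : Gen → M3
  | Sum.inl p => Matrix.single p p 1
  | Sum.inr (Sum.inl i) => Matrix.single 0 1 (X i)
  | Sum.inr (Sum.inr (Sum.inl i)) => Matrix.single 1 2 (X i)
  | Sum.inr (Sum.inr (Sum.inr i)) => Matrix.single 2 0 (X i)

noncomputable def ψ₀ : F →ₐ[ℂ] M3 := FreeAlgebra.lift ℂ g

lemma ψ₀e (p : Fin 3) : ψ₀ (e p) = Matrix.single p p 1 := by
  simp [ψ₀, e, g]
lemma ψ₀a (i : Fin 3) : ψ₀ (a i) = Matrix.single 0 1 (X i) := by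
  simp [ψ₀, a, g]
lemma ψ₀b (i : Fin 3) : ψ₀ (b i) = Matrix.single 1 2 (X i) := by
  simp [ψ₀, b, g]
lemma ψ₀c (i : Fin 3) : ψ₀ (c i) = Matrix.single 2 0 (X i) := by
  simp [ψ₀, c, g]

lemma ψ₀rel : ∀ ⦃u v : F⦄, PathRel u v → ψ₀ u = ψ₀ v := by
  intro u v h
  induction h with
  | ee i j =>
    rcases eq_or_ne i j with rfl | hij
    · simp [_root_.map_mul, ψ₀e]
    · rw [if_neg hij, _root_.map_zero, _root_.map_mul, ψ₀e, ψ₀e,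
        Matrix.single_mul_single_of_ne 1 i i j hij 1]
  | unit =>
    simp only [_root_.map_add, _root_.map_one, ψ₀e]
    ext p q
    fin_cases p <;> fin_cases q <;>
      simp [Matrix.single, Matrix.one_apply]
  | pa i => simp [_root_.map_mul, ψ₀e, ψ₀a]
  | pb i => simp [_root_.map_mul, ψ₀e, ψ₀b]
  | pc i => simp [_root_.map_mul, ψ₀e, ψ₀c]
  | ab i j => simp only [_root_.map_mul, ψ₀a, ψ₀b, Matrix.single_mul_single_same]; rw [mul_comm]
  | bc i j => simp only [_root_.map_mul, ψ₀b, ψ₀c, Matrix.single_mul_single_same]; rw [mul_comm]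
  | ca i j => simp only [_root_.map_mul, ψ₀c, ψ₀a, Matrix.single_mul_single_same]; rw [mul_comm]

noncomputable def ψ : A →ₐ[ℂ] M3 := RingQuot.liftAlgHom ℂ ⟨ψ₀, ψ₀rel⟩

lemma ψmk (u : F) : ψ (RingQuot.mkAlgHom ℂ PathRel u) = ψ₀ u := by
  simp [ψ, RingQuot.liftAlgHom_mkAlgHom_apply]

lemma ψaa (i : Fin 3) : ψ (aa i) = Matrix.single 0 1 (X i) := by rw [aa, ψmk, ψ₀a]
lemma ψbb (i : Fin 3) : ψ (bb i) = Matrix.single 1 2 (X i) := by rw [bb, ψmk, ψ₀b]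
lemma ψcc (i : Fin 3) : ψ (cc i) = Matrix.single 2 0 (X i) := by rw [cc, ψmk, ψ₀c]

noncomputable def ee (p : Fin 3) : A := RingQuot.mkAlgHom ℂ PathRel (e p)
lemma ψee (p : Fin 3) : ψ (ee p) = Matrix.single p p 1 := by rw [ee, ψmk, ψ₀e]


-- ## Relations in A
noncomputable def arr (p : Fin 3) (i : Fin 3) : A := ![aa, bb, cc] p i

lemma arr0 (i : Fin 3) : arr 0 i = aa i := rfl
lemma arr1 (i : Fin 3) : arr 1 i = bb i := rfl
lemma arr2 (i : Fin 3) : arr 2 i = cc i := rfl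

lemma ψarr (p i : Fin 3) : ψ (arr p i) = Matrix.single p (p + 1) (X i) := by
  fin_cases p
  · exact (show ψ (arr 0 i) = Matrix.single 0 (0 + 1) (X i) by rw [arr0, ψaa]; rfl)
  · exact (show ψ (arr 1 i) = Matrix.single 1 (1 + 1) (X i) by rw [arr1, ψbb]; rfl)
  · exact (show ψ (arr 2 i) = Matrix.single 2 (2 + 1) (X i) by rw [arr2, ψcc]; rfl)

lemma R1 (p q : Fin 3) : ee p * ee q = if p = q then ee p else 0 := by
  have h := RingQuot.mkAlgHom_rel ℂ (PathRel.ee p q)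
  rw [_root_.map_mul] at h
  rw [show (RingQuot.mkAlgHom ℂ PathRel) (e p) = ee p from rfl,
    show (RingQuot.mkAlgHom ℂ PathRel) (e q) = ee q from rfl] at h
  rw [h]
  split_ifs <;> simp [ee]

lemma R2 : ee 0 + ee 1 + ee 2 = 1 := by
  have h := RingQuot.mkAlgHom_rel ℂ (PathRel.unit)
  rwa [_root_.map_add, _root_.map_add, _root_.map_one] at h

lemma R3 (p i : Fin 3) : arr p i = ee p * arr p i * ee (p + 1) := by
  fin_cases p
  · have h := RingQuot.mkAlgHom_rel ℂ (PathRel.pa i)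
    rw [_root_.map_mul, _root_.map_mul] at h
    exact h
  · have h := RingQuot.mkAlgHom_rel ℂ (PathRel.pb i)
    rw [_root_.map_mul, _root_.map_mul] at h
    exact h
  · have h := RingQuot.mkAlgHom_rel ℂ (PathRel.pc i)
    rw [_root_.map_mul, _root_.map_mul] at h
    exact h

lemma R4 (p : Fin 3) (i j : Fin 3) :
    arr p i * arr (p + 1) j = arr p j * arr (p + 1) i := by
  fin_cases p
  · have h := RingQuot.mkAlgHom_rel ℂ (PathRel.ab i j)
    rw [_root_.map_mul, _root_.map_mul] at h
    exact h
  · have h := RingQuot.mkAlgHom_rel ℂ (PathRel.bc i j)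
    rw [_root_.map_mul, _root_.map_mul] at h
    exact h
  · have h := RingQuot.mkAlgHom_rel ℂ (PathRel.ca i j)
    rw [_root_.map_mul, _root_.map_mul] at h
    exact h

lemma e_idem (p : Fin 3) : ee p * ee p = ee p := by rw [R1, if_pos rfl]

lemma e_mul_arr (p i : Fin 3) : ee p * arr p i = arr p i := by
  conv_lhs => rw [R3 p i]
  rw [← mul_assoc, ← mul_assoc, e_idem, ← R3]

lemma arr_mul_e (p i : Fin 3) : arr p i * ee (p + 1) = arr p i := by
  conv_lhs => rw [R3 p i]
  rw [mul_assoc, mul_assoc, e_idem, ← mul_assoc, ← R3]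

lemma e_mul_arr_ne {q p : Fin 3} (h : q ≠ p) (i : Fin 3) : ee q * arr p i = 0 := by
  conv_lhs => rw [R3 p i]
  rw [← mul_assoc, ← mul_assoc, R1, if_neg h, zero_mul, zero_mul]

lemma arr_mul_e_ne {q p : Fin 3} (h : q ≠ p + 1) (i : Fin 3) : arr p i * ee q = 0 := by
  conv_lhs => rw [R3 p i]
  rw [mul_assoc, mul_assoc, R1, if_neg (fun hh => h hh.symm), mul_zero, mul_zero]

lemma e_mul_e_ne {p q : Fin 3} (h : p ≠ q) : ee p * ee q = 0 := by rw [R1, if_neg h]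

-- ## Paths
noncomputable def P : Fin 3 → List (Fin 3) → A
  | _, [] => 1
  | p, (i :: L) => arr p i * P (p + 1) L

noncomputable def Q (p : Fin 3) (L : List (Fin 3)) : A := ee p * P p L

lemma Q_nil (p : Fin 3) : Q p [] = ee p := by simp [Q, P]

lemma Q_cons (p : Fin 3) (i : Fin 3) (L : List (Fin 3)) :
    Q p (i :: L) = arr p i * Q (p + 1) L := by
  rw [Q, P, Q, ← mul_assoc, e_mul_arr]
  conv_lhs => rw [← arr_mul_e p i]
  rw [mul_assoc]

lemma P_swap (p : Fin 3) (i j : Fin 3) (L : List (Fin 3)) :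
    P p (i :: j :: L) = P p (j :: i :: L) := by
  rw [P, P, P, P, ← mul_assoc, ← mul_assoc, R4]

lemma P_perm (p : Fin 3) {L L' : List (Fin 3)} (h : L.Perm L') : P p L = P p L' := by
  induction h generalizing p with
  | nil => rfl
  | cons i h ih => rw [P, P, ih]
  | swap i j L => exact P_swap p j i L
  | trans h1 h2 ih1 ih2 => rw [ih1, ih2]

lemma Q_perm (p : Fin 3) {L L' : List (Fin 3)} (h : L.Perm L') : Q p L = Q p L' := by
  rw [Q, Q, P_perm p h]


-- ## Multiplication rules for Q
lemma Q_mul_e (p : Fin 3) (L : List (Fin 3)) (q : Fin 3) :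
    Q p L * ee q = if q = p + (L.length : Fin 3) then Q p L else 0 := by
  induction L generalizing p with
  | nil =>
    rw [Q_nil]
    simp only [List.length_nil, Nat.cast_zero, add_zero]
    rw [R1]
    rcases eq_or_ne q p with rfl | h
    · simp
    · rw [if_neg (fun hh => h hh.symm), if_neg fun hh => h hh]
  | cons i L ih =>
    rw [Q_cons, mul_assoc, ih]
    simp only [List.length_cons, Nat.cast_add, Nat.cast_one]
    have harith : p + 1 + (L.length : Fin 3) = p + ((L.length : Fin 3) + 1) := by ring
    rw [harith]
    split_ifs
    · rfl
    · rw [mul_zero]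

lemma Q_mul_arr (p : Fin 3) (L : List (Fin 3)) (q i : Fin 3) :
    Q p L * arr q i = if q = p + (L.length : Fin 3) then Q p (L ++ [i]) else 0 := by
  induction L generalizing p with
  | nil =>
    rw [Q_nil]
    simp only [List.length_nil, Nat.cast_zero, add_zero, List.nil_append]
    rcases eq_or_ne q p with rfl | h
    · rw [if_pos rfl, e_mul_arr, Q_cons, Q_nil, arr_mul_e]
    · rw [if_neg h, e_mul_arr_ne (fun hh => h hh.symm)]
  | cons j L ih =>
    rw [Q_cons, mul_assoc, ih]
    simp only [List.length_cons, Nat.cast_add, Nat.cast_one, List.cons_append]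
    have harith : p + 1 + (L.length : Fin 3) = p + ((L.length : Fin 3) + 1) := by ring
    rw [harith]
    split_ifs
    · rw [Q_cons]
    · rw [mul_zero]

lemma e_mul_Q (q p : Fin 3) (L : List (Fin 3)) :
    ee q * Q p L = if q = p then Q p L else 0 := by
  rw [Q, ← mul_assoc, R1]
  split_ifs with h
  · subst h; rfl
  · rw [zero_mul]

lemma Q_mul_P (p : Fin 3) (L L' : List (Fin 3)) :
    Q p L * P (p + (L.length : Fin 3)) L' = Q p (L ++ L') := by
  induction L' generalizing L with
  | nil => rw [P, mul_one, List.append_nil]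
  | cons i L' ih =>
    rw [P, ← mul_assoc]
    have h1 : Q p L * arr (p + (L.length : Fin 3)) i = Q p (L ++ [i]) := by
      rw [Q_mul_arr, if_pos rfl]
    rw [h1]
    have harith : p + (L.length : Fin 3) + 1 = p + (((L ++ [i]).length : ℕ) : Fin 3) := by
      simp only [List.length_append, List.length_cons, List.length_nil, Nat.cast_add,
        Nat.cast_one, Nat.cast_zero]
      ring
    rw [harith, ih]
    simp

lemma Q_mul_Q (p : Fin 3) (L : List (Fin 3)) (q : Fin 3) (L' : List (Fin 3)) :
    Q p L * Q q L' = if q = p + (L.length : Fin 3) then Q p (L ++ L') else 0 := by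
  rw [show Q q L' = ee q * P q L' from rfl, ← mul_assoc, Q_mul_e]
  split_ifs with h
  · subst h; rw [Q_mul_P]
  · rw [zero_mul]

-- ## Normal forms indexed by multisets
noncomputable def Qm (p : Fin 3) (s : Multiset (Fin 3)) : A := Q p (s.sort (· ≤ ·))

lemma Q_eq_Qm (p : Fin 3) (L : List (Fin 3)) : Q p L = Qm p ↑L := by
  refine Q_perm p ?_
  rw [← Multiset.coe_eq_coe, Multiset.sort_eq]

noncomputable def Nf : Fin 3 × Multiset (Fin 3) → A := fun t => Qm t.1 t.2

-- ## Spanning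
noncomputable def G : Gen → A := fun g => RingQuot.mkAlgHom ℂ PathRel (FreeAlgebra.ι ℂ g)

lemma adjoin_G : Algebra.adjoin ℂ (Set.range G) = ⊤ := by
  have h1 : Set.range G = ⇑(RingQuot.mkAlgHom ℂ PathRel) '' Set.range (FreeAlgebra.ι ℂ) := by
    rw [← Set.range_comp]; rfl
  rw [h1, ← AlgHom.map_adjoin, FreeAlgebra.adjoin_range_ι, Algebra.map_top]
  exact (AlgHom.range_eq_top _).mpr (RingQuot.mkAlgHom_surjective ℂ PathRel)


-- ## ψ of normal forms
lemma XmulG (i : Fin 3) (m : Fin 3 →₀ ℕ) (r : ℂ) :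
    X i * monomial m r = monomial (Finsupp.single i 1 + m) r := by
  rw [X, monomial_mul, one_mul]

lemma Xmul (i : Fin 3) (m : Fin 3 →₀ ℕ) :
    X i * monomial m (1 : ℂ) = monomial (Finsupp.single i 1 + m) 1 := by
  rw [X, monomial_mul, one_mul]

lemma toFinsupp_cons (i : Fin 3) (L : List (Fin 3)) :
    Multiset.toFinsupp (↑(i :: L) : Multiset (Fin 3)) =
      Finsupp.single i 1 + Multiset.toFinsupp (↑L : Multiset (Fin 3)) := by
  have : (↑(i :: L) : Multiset (Fin 3)) = {i} + ↑L := by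
    simp [Multiset.cons_coe]
  rw [this, Multiset.toFinsupp_add, Multiset.toFinsupp_singleton]

lemma ψQ (p : Fin 3) (L : List (Fin 3)) :
    ψ (Q p L) = Matrix.single p (p + (L.length : Fin 3))
      (monomial (Multiset.toFinsupp (↑L : Multiset (Fin 3))) 1) := by
  induction L generalizing p with
  | nil =>
    rw [show Q p [] = ee p from Q_nil p, ψee]
    simp [Multiset.toFinsupp_zero]
  | cons i L ih =>
    rw [Q_cons, _root_.map_mul, ψarr, ih, Matrix.single_mul_single_same, Xmul, toFinsupp_cons]
    have harith : p + 1 + (L.length : Fin 3) = p + (((i :: L).length : ℕ) : Fin 3) := by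
      simp only [List.length_cons, Nat.cast_add, Nat.cast_one]; ring
    rw [harith]

lemma ψQm (p : Fin 3) (s : Multiset (Fin 3)) :
    ψ (Qm p s) = Matrix.single p (p + ((Multiset.card s : ℕ) : Fin 3))
      (monomial (Multiset.toFinsupp s) 1) := by
  rw [Qm, ψQ, Multiset.length_sort, Multiset.sort_eq]

-- ## Spanning: the normal forms span A
noncomputable abbrev sp : Submodule ℂ A := Submodule.span ℂ (Set.range Nf)

lemma arr_eq_Q (p i : Fin 3) : arr p i = Q p [i] := by
  rw [Q_cons, Q_nil, arr_mul_e]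

lemma Q_mem_sp (p : Fin 3) (L : List (Fin 3)) : Q p L ∈ sp := by
  rw [Q_eq_Qm]
  exact Submodule.subset_span ⟨(p, (↑L : Multiset (Fin 3))), rfl⟩

lemma mul_mem_sp {u v : A} (hu : u ∈ sp) (hv : v ∈ sp) : u * v ∈ sp := by
  induction hu, hv using Submodule.span_induction₂ with
  | mem_mem u v hu hv =>
    obtain ⟨⟨p, s⟩, rfl⟩ := hu
    obtain ⟨⟨q, t⟩, rfl⟩ := hv
    show Qm p s * Qm q t ∈ sp
    rw [Qm, Qm, Q_mul_Q]
    split_ifs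
    · exact Q_mem_sp _ _
    · exact zero_mem _
  | zero_left v hv => rw [zero_mul]; exact zero_mem _
  | zero_right u hu => rw [mul_zero]; exact zero_mem _
  | add_left u w v hu hw hv h1 h2 => rw [add_mul]; exact add_mem h1 h2
  | add_right u v w hu hv hw h1 h2 => rw [mul_add]; exact add_mem h1 h2
  | smul_left r u v hu hv h => rw [smul_mul_assoc]; exact Submodule.smul_mem _ _ h
  | smul_right r u v hu hv h => rw [mul_smul_comm]; exact Submodule.smul_mem _ _ h

lemma ee_mem_sp (p : Fin 3) : ee p ∈ sp := by
  rw [← Q_nil]; exact Q_mem_sp p []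

lemma one_mem_sp : (1 : A) ∈ sp := by
  rw [← R2]
  exact add_mem (add_mem (ee_mem_sp 0) (ee_mem_sp 1)) (ee_mem_sp 2)

noncomputable def SA : Subalgebra ℂ A :=
  Submodule.toSubalgebra sp one_mem_sp (fun _ _ h1 h2 => mul_mem_sp h1 h2)

lemma mem_sp (z : A) : z ∈ sp := by
  have htop : (⊤ : Subalgebra ℂ A) ≤ SA := by
    rw [← adjoin_G]
    apply Algebra.adjoin_le
    rintro _ ⟨g, rfl⟩
    match g with
    | Sum.inl p => exact ee_mem_sp p
    | Sum.inr (Sum.inl i) =>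
      show aa i ∈ sp
      rw [← arr0, arr_eq_Q]; exact Q_mem_sp _ _
    | Sum.inr (Sum.inr (Sum.inl i)) =>
      show bb i ∈ sp
      rw [← arr1, arr_eq_Q]; exact Q_mem_sp _ _
    | Sum.inr (Sum.inr (Sum.inr i)) =>
      show cc i ∈ sp
      rw [← arr2, arr_eq_Q]; exact Q_mem_sp _ _
  exact htop (Algebra.mem_top)

lemma rep (z : A) : ∃ c : (Fin 3 × Multiset (Fin 3)) →₀ ℂ,
    (c.sum fun t r => r • Nf t) = z :=
  Finsupp.mem_span_range_iff_exists_finsupp.mp (mem_sp z)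


-- ## Coefficient extraction
lemma entryCoeff {z : A} {c : (Fin 3 × Multiset (Fin 3)) →₀ ℂ}
    (hc : (c.sum fun t r => r • Nf t) = z) (p q : Fin 3) (m : Fin 3 →₀ ℕ) :
    coeff m (ψ z p q) =
      if q = p + ((Multiset.card (Finsupp.toMultiset m) : ℕ) : Fin 3)
      then c (p, Finsupp.toMultiset m) else 0 := by
  subst hc
  rw [map_finsuppSum]
  have hsum : (c.sum fun t r => ψ (r • Nf t)) p q
      = ∑ t ∈ c.support, (c t • ψ (Nf t)) p q := by
    rw [Finsupp.sum]
    rw [Matrix.sum_apply]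
    congr 1
    ext t
    rw [_root_.map_smul]
  rw [hsum, MvPolynomial.coeff_sum]
  have hterm : ∀ t : Fin 3 × Multiset (Fin 3),
      coeff m ((c t • ψ (Nf t)) p q) =
        c t * (if t = (p, Finsupp.toMultiset m)
          then (if q = p + ((Multiset.card (Finsupp.toMultiset m) : ℕ) : Fin 3)
                then 1 else 0) else 0) := by
    rintro ⟨p', s'⟩
    rw [Matrix.smul_apply, MvPolynomial.coeff_smul, smul_eq_mul]
    congr 1
    rw [show Nf (p', s') = Qm p' s' from rfl, ψQm]
    rcases eq_or_ne (p', s') (p, Finsupp.toMultiset m) with heq | hne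
    · rw [if_pos heq]
      obtain ⟨h1, h2⟩ := Prod.mk.injEq .. ▸ heq
      subst h1
      subst h2
      rw [Finsupp.toMultiset_toFinsupp] at *
      rcases eq_or_ne q (p' + ((Multiset.card (Finsupp.toMultiset m) : ℕ) : Fin 3)) with hq | hq
      · rw [if_pos hq]
        subst hq
        rw [Matrix.single_apply_same, MvPolynomial.coeff_monomial,
          if_pos (Finsupp.toMultiset_toFinsupp m ▸ rfl)]
      · rw [if_neg hq]
        rw [Matrix.single_apply_of_ne, MvPolynomial.coeff_zero]
        rintro ⟨-, h2⟩
        exact hq h2.symm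
    · rw [if_neg hne]
      by_cases hrow : p' = p
      · subst hrow
        -- since t ≠ t₀, s' ≠ toMultiset m, so the monomial differs
        have hs : s' ≠ Finsupp.toMultiset m := fun h => hne (by rw [h])
        by_cases hcol : p' + ((Multiset.card s' : ℕ) : Fin 3) = q
        · rw [show Matrix.single p' (p' + ((Multiset.card s' : ℕ) : Fin 3))
              ((monomial (Multiset.toFinsupp s')) (1:ℂ)) p' q = monomial (Multiset.toFinsupp s') 1 by
              rw [← hcol]; exact Matrix.single_apply_same _ _ _]
          rw [MvPolynomial.coeff_monomial, if_neg]
          intro h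
          exact hs (Multiset.toFinsupp_eq_iff.mp h)
        · rw [Matrix.single_apply_of_ne, MvPolynomial.coeff_zero]
          rintro ⟨-, h2⟩
          exact hcol h2
      · rw [Matrix.single_apply_of_ne, MvPolynomial.coeff_zero]
        rintro ⟨h1, -⟩
        exact hrow h1
  calc (∑ t ∈ c.support, coeff m ((c t • ψ (Nf t)) p q))
      = ∑ t ∈ c.support, c t * (if t = (p, Finsupp.toMultiset m)
          then (if q = p + ((Multiset.card (Finsupp.toMultiset m) : ℕ) : Fin 3)
                then 1 else 0) else 0) := by
        exact Finset.sum_congr rfl fun t _ => hterm t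
    _ = c (p, Finsupp.toMultiset m) * (if (p, Finsupp.toMultiset m) = (p, Finsupp.toMultiset m)
          then (if q = p + ((Multiset.card (Finsupp.toMultiset m) : ℕ) : Fin 3)
                then 1 else 0) else 0) := by
        apply Finset.sum_eq_single
        · intro t ht htne
          rw [if_neg htne, mul_zero]
        · intro h
          rw [Finsupp.notMem_support_iff.mp h, zero_mul]
    _ = _ := by rw [if_pos rfl, mul_ite, mul_one, mul_zero]

lemma ψ_inj : Function.Injective ψ := by
  have hker : ∀ z : A, ψ z = 0 → z = 0 := by
    intro z hz
    obtain ⟨c, hc⟩ := rep z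
    have hc0 : c = 0 := by
      ext t
      obtain ⟨p, s⟩ := t
      have := entryCoeff hc p (p + ((Multiset.card s : ℕ) : Fin 3)) (Multiset.toFinsupp s)
      rw [hz] at this
      simp only [Matrix.zero_apply, MvPolynomial.coeff_zero] at this
      rw [Multiset.toFinsupp_toMultiset] at this
      rw [if_pos rfl] at this
      exact this.symm
    rw [← hc, hc0, Finsupp.sum_zero_index]
  intro z w h
  have : ψ (z - w) = 0 := by rw [_root_.map_sub, h, sub_self]
  exact sub_eq_zero.mp (hker _ this)

lemma deg_cond (z : A) (m : Fin 3 →₀ ℕ) (h : ¬ (3 : ℕ) ∣ (m 0 + m 1 + m 2)) :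
    coeff m (ψ z 0 0) = 0 := by
  obtain ⟨c, hc⟩ := rep z
  rw [entryCoeff hc]
  rw [if_neg]
  intro hcard
  apply h
  have h1 : ((Multiset.card (Finsupp.toMultiset m) : ℕ) : Fin 3) = 0 := by
    have := hcard
    rwa [left_eq_add] at this
  rw [Fin.natCast_eq_zero] at h1
  have h2 : Multiset.card (Finsupp.toMultiset m) = m 0 + m 1 + m 2 := by
    rw [Finsupp.card_toMultiset]
    rw [Finsupp.sum_fintype _ _ (fun _ => rfl)]
    simp [Fin.sum_univ_three]
  rwa [h2] at h1


-- ## Centrality of the x i j k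
lemma perm4 (w' x' y' z' : Fin 3) : List.Perm [w', x', y', z'] [z', x', y', w'] := by
  have h1 : List.Perm [w', x', y', z'] [z', w', x', y'] := by
    simpa using (List.perm_append_comm (l₁ := [w', x', y']) (l₂ := [z']))
  refine h1.trans (List.Perm.cons z' ?_)
  simpa using (List.perm_append_comm (l₁ := [w']) (l₂ := [x', y']))

lemma cast3 : ((3 : ℕ) : Fin 3) = 0 := rfl

lemma xQ (i j k : Fin 3) : x i j k = Q 0 [i, j, k] + Q 1 [j, k, i] + Q 2 [k, i, j] := by
  have h0 : Q 0 [i, j, k] = aa i * bb j * cc k := by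
    rw [Q_cons, Q_cons, Q_cons, Q_nil, arr_mul_e, ← mul_assoc]
    rfl
  have h1 : Q 1 [j, k, i] = bb j * cc k * aa i := by
    rw [Q_cons, Q_cons, Q_cons, Q_nil, arr_mul_e, ← mul_assoc]
    rfl
  have h2 : Q 2 [k, i, j] = cc k * aa i * bb j := by
    rw [Q_cons, Q_cons, Q_cons, Q_nil, arr_mul_e, ← mul_assoc]
    rfl
  rw [x, h0, h1, h2]

lemma Q3_mul_e (p i j k q : Fin 3) :
    Q p [i, j, k] * ee q = if q = p then Q p [i, j, k] else 0 := by
  rw [Q_mul_e, show (([i, j, k] : List (Fin 3)).length : Fin 3) = 0 by norm_num [cast3], add_zero]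

lemma Q3_mul_arr (p i j k q l : Fin 3) :
    Q p [i, j, k] * arr q l = if q = p then Q p [i, j, k, l] else 0 := by
  rw [Q_mul_arr, show (([i, j, k] : List (Fin 3)).length : Fin 3) = 0 by norm_num [cast3], add_zero]
  rfl

lemma arr_mul_Q (q l p : Fin 3) (L : List (Fin 3)) :
    arr q l * Q p L = if p = q + 1 then Q q (l :: L) else 0 := by
  rcases eq_or_ne p (q + 1) with rfl | h
  · rw [if_pos rfl, Q_cons]
  · rw [if_neg h, show Q p L = ee p * P p L from rfl, ← mul_assoc, arr_mul_e_ne h, zero_mul]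

lemma x_comm_e (i j k q : Fin 3) : x i j k * ee q = ee q * x i j k := by
  rw [xQ, add_mul, add_mul, Q3_mul_e, Q3_mul_e, Q3_mul_e,
    mul_add, mul_add, e_mul_Q, e_mul_Q, e_mul_Q]

lemma x_comm_arr (i j k q l : Fin 3) : x i j k * arr q l = arr q l * x i j k := by
  rw [xQ, add_mul, add_mul, Q3_mul_arr, Q3_mul_arr, Q3_mul_arr,
    mul_add, mul_add, arr_mul_Q, arr_mul_Q, arr_mul_Q]
  fin_cases q
  · simpa using Q_perm 0 (perm4 i j k l)
  · simpa using Q_perm 1 (perm4 j k i l)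
  · simpa using Q_perm 2 (perm4 k i j l)

lemma x_central (i j k : Fin 3) : x i j k ∈ Subalgebra.center ℂ A := by
  rw [Subalgebra.mem_center_iff]
  intro w
  have hw : w ∈ (⊤ : Subalgebra ℂ A) := Algebra.mem_top
  rw [← adjoin_G] at hw
  induction hw using Algebra.adjoin_induction with
  | mem g hg =>
    obtain ⟨g, rfl⟩ := hg
    match g with
    | Sum.inl p => exact (x_comm_e i j k p).symm
    | Sum.inr (Sum.inl l) => exact (x_comm_arr i j k 0 l).symm
    | Sum.inr (Sum.inr (Sum.inl l)) => exact (x_comm_arr i j k 1 l).symm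
    | Sum.inr (Sum.inr (Sum.inr l)) => exact (x_comm_arr i j k 2 l).symm
  | algebraMap r => rw [Algebra.commutes]
  | add u v hu hv h1 h2 => rw [add_mul, mul_add, h1, h2]
  | mul u v hu hv h1 h2 => rw [mul_assoc, h2, ← mul_assoc, h1, mul_assoc]


-- ## ψ of x, and scalar matrices
lemma ψx (i j k : Fin 3) : ψ (x i j k) = algebraMap R M3 (X i * X j * X k) := by
  rw [x, _root_.map_add, _root_.map_add, _root_.map_mul, _root_.map_mul, _root_.map_mul,
    _root_.map_mul, _root_.map_mul, _root_.map_mul, ψaa, ψbb, ψcc,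
    Matrix.single_mul_single_same, Matrix.single_mul_single_same,
    Matrix.single_mul_single_same, Matrix.single_mul_single_same,
    Matrix.single_mul_single_same, Matrix.single_mul_single_same]
  ext p q
  fin_cases p <;> fin_cases q <;>
    simp [Matrix.algebraMap_matrix_apply, Matrix.single] <;> ring

lemma scalar_mul_apply (f : R) (M : M3) (p q : Fin 3) :
    (algebraMap R M3 f * M) p q = f * M p q := by
  rw [Algebra.algebraMap_eq_smul_one, smul_mul_assoc, one_mul, Matrix.smul_apply, smul_eq_mul]

-- ## central elements are scalar matrices
lemma center_scalar {z : A} (hz : z ∈ Subalgebra.center ℂ A) :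
    ψ z = algebraMap R M3 (ψ z 0 0) := by
  have hcomm : ∀ w : A, ψ w * ψ z = ψ z * ψ w := by
    intro w
    rw [← _root_.map_mul, ← _root_.map_mul, Subalgebra.mem_center_iff.mp hz w]
  have off : ∀ p q : Fin 3, p ≠ q → ψ z p q = 0 := by
    intro p q h
    have h1 := congrFun (congrFun (hcomm (ee q)) p) q
    rw [ψee] at h1
    have h2 := (Matrix.single_mul_apply_of_ne 1 q q p q h (ψ z)).symm.trans
      (h1.trans (Matrix.mul_single_apply_same 1 q q p (ψ z)))
    rw [mul_one] at h2
    exact h2.symm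
  have d01 : ψ z 0 0 = ψ z 1 1 := by
    have h1 := congrFun (congrFun (hcomm (aa 0)) 0) 1
    rw [ψaa] at h1
    have h2 := (Matrix.single_mul_apply_same (X 0) 0 1 1 (ψ z)).symm.trans
      (h1.trans (Matrix.mul_single_apply_same (X 0) 0 1 0 (ψ z)))
    exact (mul_right_cancel₀ (MvPolynomial.X_ne_zero 0)
      ((mul_comm (ψ z 1 1) (X 0)).trans h2)).symm
  have d12 : ψ z 1 1 = ψ z 2 2 := by
    have h1 := congrFun (congrFun (hcomm (bb 0)) 1) 2
    rw [ψbb] at h1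
    have h2 := (Matrix.single_mul_apply_same (X 0) 1 2 2 (ψ z)).symm.trans
      (h1.trans (Matrix.mul_single_apply_same (X 0) 1 2 1 (ψ z)))
    exact (mul_right_cancel₀ (MvPolynomial.X_ne_zero 0)
      ((mul_comm (ψ z 2 2) (X 0)).trans h2)).symm
  apply Matrix.ext
  intro p q
  rw [Matrix.algebraMap_matrix_apply]
  fin_cases p <;> fin_cases q <;> simp
  · exact off 0 1 (by decide)
  · exact off 0 2 (by decide)
  · exact off 1 0 (by decide)
  · exact d01.symm
  · exact off 1 2 (by decide)
  · exact off 2 0 (by decide)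
  · exact off 2 1 (by decide)
  · exact (d01.trans d12).symm

-- ## polynomials with degrees divisible by 3
noncomputable def AdjR : Subalgebra ℂ R :=
  Algebra.adjoin ℂ {p : R | ∃ i j k : Fin 3, p = X i * X j * X k}

lemma toFinsupp_mcons (i : Fin 3) (s : Multiset (Fin 3)) :
    Multiset.toFinsupp (i ::ₘ s) = Finsupp.single i 1 + Multiset.toFinsupp s := by
  rw [← Multiset.singleton_add, Multiset.toFinsupp_add, Multiset.toFinsupp_singleton]

lemma mono3 : ∀ (n : ℕ) (s : Multiset (Fin 3)), Multiset.card s = 3 * n →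
    ∀ r : ℂ, monomial (Multiset.toFinsupp s) r ∈ AdjR := by
  intro n
  induction n with
  | zero =>
    intro s hs r
    rw [Nat.mul_zero, Multiset.card_eq_zero] at hs
    subst hs
    rw [Multiset.toFinsupp_zero, monomial_zero', ← MvPolynomial.algebraMap_eq]
    exact Subalgebra.algebraMap_mem _ r
  | succ n ih =>
    intro s hs r
    have h1 : ∃ i, i ∈ s := Multiset.exists_mem_of_ne_zero (by
      intro h; rw [h] at hs; simp at hs)
    obtain ⟨i, hi⟩ := h1
    obtain ⟨t, rfl⟩ := Multiset.exists_cons_of_mem hi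
    have h2 : ∃ j, j ∈ t := Multiset.exists_mem_of_ne_zero (by
      intro h; rw [h] at hs; simp at hs; omega)
    obtain ⟨j, hj⟩ := h2
    obtain ⟨u, rfl⟩ := Multiset.exists_cons_of_mem hj
    have h3 : ∃ k, k ∈ u := Multiset.exists_mem_of_ne_zero (by
      intro h; rw [h] at hs; simp at hs; omega)
    obtain ⟨k, hk⟩ := h3
    obtain ⟨v, rfl⟩ := Multiset.exists_cons_of_mem hk
    have hv : Multiset.card v = 3 * n := by
      simp only [Multiset.card_cons] at hs
      omega
    have heq : monomial (Multiset.toFinsupp (i ::ₘ j ::ₘ k ::ₘ v)) r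
        = (X i * X j * X k) * monomial (Multiset.toFinsupp v) r := by
      rw [toFinsupp_mcons, toFinsupp_mcons, toFinsupp_mcons, mul_assoc, mul_assoc,
        XmulG, XmulG, XmulG]
    rw [heq]
    exact mul_mem (Algebra.subset_adjoin ⟨i, j, k, rfl⟩) (ih v hv r)

lemma card_toMultiset_eq (m : Fin 3 →₀ ℕ) :
    Multiset.card (Finsupp.toMultiset m) = m 0 + m 1 + m 2 := by
  rw [Finsupp.card_toMultiset, Finsupp.sum_fintype _ _ (fun _ => rfl)]
  simp [Fin.sum_univ_three]

lemma poly3 (p : R) (hp : ∀ m ∈ p.support, (3 : ℕ) ∣ (m 0 + m 1 + m 2)) : p ∈ AdjR := by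
  rw [← MvPolynomial.support_sum_monomial_coeff p]
  apply sum_mem
  intro m hm
  obtain ⟨n, hn⟩ := hp m hm
  have h1 : Multiset.card (Finsupp.toMultiset m) = 3 * n := by
    rw [card_toMultiset_eq]; exact hn
  have := mono3 n (Finsupp.toMultiset m) h1 (coeff m p)
  rwa [Finsupp.toMultiset_toFinsupp] at this


-- ## lifting invariant polynomials to the adjoin of the x's
noncomputable def xset : Set A := {z : A | ∃ i j k : Fin 3, i ≤ j ∧ j ≤ k ∧ z = x i j k}

lemma liftAdj {f : R} (hf : f ∈ AdjR) :
    ∃ w : A, w ∈ Algebra.adjoin ℂ xset ∧ ψ w = algebraMap R M3 f := by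
  induction hf using Algebra.adjoin_induction with
  | mem p hp =>
    obtain ⟨i, j, k, rfl⟩ := hp
    have key : ∀ i' j' k' : Fin 3, i' ≤ j' → j' ≤ k' →
        (X i' * X j' * X k' : R) = X i * X j * X k →
        ∃ w : A, w ∈ Algebra.adjoin ℂ xset ∧ ψ w = algebraMap R M3 (X i * X j * X k) := by
      intro i' j' k' h1 h2 h3
      exact ⟨x i' j' k', Algebra.subset_adjoin ⟨i', j', k', h1, h2, rfl⟩,
        by rw [ψx, h3]⟩
    rcases le_total i j with hij | hij <;> rcases le_total j k with hjk | hjk <;>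
      rcases le_total i k with hik | hik
    · exact key i j k hij hjk rfl
    · exact key i j k hij hjk rfl
    · exact key i k j hik hjk (by ring)
    · exact key k i j hik hij (by ring)
    · exact key j i k hij hik (by ring)
    · exact key j k i hjk hik (by ring)
    · exact key k j i hjk hij (by ring)
    · exact key k j i hjk hij (by ring)
  | algebraMap r =>
    refine ⟨algebraMap ℂ A r, Subalgebra.algebraMap_mem _ r, ?_⟩
    rw [AlgHom.commutes, IsScalarTower.algebraMap_apply ℂ R M3 r]
  | add u v hu hv ihu ihv =>
    obtain ⟨w1, hw1, hψ1⟩ := ihu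
    obtain ⟨w2, hw2, hψ2⟩ := ihv
    exact ⟨w1 + w2, add_mem hw1 hw2, by rw [_root_.map_add, hψ1, hψ2, _root_.map_add]⟩
  | mul u v hu hv ihu ihv =>
    obtain ⟨w1, hw1, hψ1⟩ := ihu
    obtain ⟨w2, hw2, hψ2⟩ := ihv
    exact ⟨w1 * w2, mul_mem hw1 hw2, by rw [_root_.map_mul, hψ1, hψ2, _root_.map_mul]⟩

lemma adjoin_le_center : Algebra.adjoin ℂ xset ≤ Subalgebra.center ℂ A := by
  apply Algebra.adjoin_le
  rintro z ⟨i, j, k, -, -, rfl⟩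
  exact x_central i j k

lemma support_cond {z : A} (m : Fin 3 →₀ ℕ) (hm : m ∈ (ψ z 0 0).support) :
    (3 : ℕ) ∣ (m 0 + m 1 + m 2) := by
  by_contra h
  exact (MvPolynomial.mem_support_iff.mp hm) (deg_cond z m h)

lemma center_eq : Subalgebra.center ℂ A = Algebra.adjoin ℂ xset := by
  apply le_antisymm _ adjoin_le_center
  intro z hz
  have hf : ψ z 0 0 ∈ AdjR := poly3 _ (fun m hm => support_cond m hm)
  obtain ⟨w, hw, hψw⟩ := liftAdj hf
  have : ψ z = ψ w := by rw [hψw, ← center_scalar hz]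
  rwa [ψ_inj this]

-- ## the algebra map φ
noncomputable def φ : Subalgebra.center ℂ A →ₐ[ℂ] R where
  toFun z := ψ z.1 0 0
  map_one' := by
    show ψ ((1 : Subalgebra.center ℂ A) : A) 0 0 = 1
    rw [show ((1 : Subalgebra.center ℂ A) : A) = 1 from rfl, _root_.map_one]
    exact Matrix.one_apply_eq 0
  map_mul' z w := by
    show ψ (z.1 * w.1) 0 0 = ψ z.1 0 0 * ψ w.1 0 0
    rw [_root_.map_mul]
    conv_lhs => rw [center_scalar z.2]
    rw [scalar_mul_apply]
  map_zero' := by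
    show ψ ((0 : Subalgebra.center ℂ A) : A) 0 0 = 0
    rw [show ((0 : Subalgebra.center ℂ A) : A) = 0 from rfl, _root_.map_zero]
    rfl
  map_add' z w := by
    show ψ (z.1 + w.1) 0 0 = ψ z.1 0 0 + ψ w.1 0 0
    rw [_root_.map_add]
    rfl
  commutes' r := by
    show ψ ((algebraMap ℂ (Subalgebra.center ℂ A) r : Subalgebra.center ℂ A) : A) 0 0
      = algebraMap ℂ R r
    rw [show ((algebraMap ℂ (Subalgebra.center ℂ A) r : Subalgebra.center ℂ A) : A)
      = algebraMap ℂ A r from rfl, AlgHom.commutes, Matrix.algebraMap_matrix_apply, if_pos rfl]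

lemma φ_inj : Function.Injective φ := by
  intro z w h
  have h1 : ψ z.1 = ψ w.1 := by
    rw [center_scalar z.2, center_scalar w.2]
    exact congrArg _ h
  exact Subtype.ext (ψ_inj h1)

lemma φ_x (i j k : Fin 3) (h : x i j k ∈ Subalgebra.center ℂ A) :
    φ ⟨x i j k, h⟩ = X i * X j * X k := by
  show ψ (x i j k) 0 0 = X i * X j * X k
  rw [ψx, Matrix.algebraMap_matrix_apply, if_pos rfl]
  exact Algebra.algebraMap_self_apply _

/-- the elements `xᵢⱼₖ` are central in `A`; the center `Z(A)` is generated as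
a ℂ-algebra by the `xᵢⱼₖ` with `i ≤ j ≤ k`; and `Z(A)` is isomorphic to the
`ℤ₃`-invariant subring of `ℂ[u₀,u₁,u₂]` via `xᵢⱼₖ ↦ uᵢuⱼuₖ` (so `Spec Z(A) = ℂ³/ℤ₃`). -/
theorem stmt_12 :
    (∀ i j k : Fin 3, x i j k ∈ Subalgebra.center ℂ A) ∧
    (Subalgebra.center ℂ A =
      Algebra.adjoin ℂ {z : A | ∃ i j k : Fin 3, i ≤ j ∧ j ≤ k ∧ z = x i j k}) ∧
    (∃ φ : Subalgebra.center ℂ A →ₐ[ℂ] MvPolynomial (Fin 3) ℂ,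
      Function.Injective φ ∧
      (∀ (i j k : Fin 3) (h : x i j k ∈ Subalgebra.center ℂ A),
        φ ⟨x i j k, h⟩ = X i * X j * X k) ∧
      Set.range (fun z => φ z) =
        {p : MvPolynomial (Fin 3) ℂ | ∀ m ∈ p.support, (3 : ℕ) ∣ (m 0 + m 1 + m 2)}) := by
  refine ⟨x_central, center_eq, φ, φ_inj, φ_x, ?_⟩
  ext p
  constructor
  · rintro ⟨z, rfl⟩
    intro m hm
    exact support_cond m hm
  · intro hp
    have hf : p ∈ AdjR := poly3 p hp
    obtain ⟨w, hw, hψw⟩ := liftAdj hf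
    refine ⟨⟨w, adjoin_le_center hw⟩, ?_⟩
    show ψ w 0 0 = p
    rw [hψw, Matrix.algebraMap_matrix_apply, if_pos rfl]
    exact Algebra.algebraMap_self_apply _

end Stmt12
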